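/- arXiv:2503.02553 — 2 statements merged into one kernel-verified Lean document; each statement's English description precedes it below -/
import Mathlib

section
/- Let M, N, m be positive integers with m ≥ 2, and let ζ_1, …, ζ_{m−1} ∈ P^-_N(M). If (u_1, …, u_m) and (v_1, …, v_m), with all u_i, v_i ∈ P^+_N(M), are two (possibly identical) solutions of the system, then the Laurent matrix polynomial Σ_{i=1}^{m−1} ~u_i(z)·v_i(z) + u_m(z)·~v_m(z) is a constant M×M matrix: there exists C ∈ ℂ^{M×M} such that this Laurent matrix polynomial equals C·z^0, i.e., all of its coefficients at nonzero powers of z vanish. -/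
noncomputable section

/-- The type of `M × M` Laurent matrix polynomials over `ℂ`. -/
abbrev LMP (M : ℕ) := Matrix (Fin M) (Fin M) (LaurentPolynomial ℂ)

/-- The adjoint of a scalar Laurent polynomial: `~p(z) = Σ conj(A_n) z^{-n}`. -/
def lpAdj (p : LaurentPolynomial ℂ) : LaurentPolynomial ℂ :=
  AddMonoidAlgebra.ofCoeff
    (Finsupp.equivMapDomain (Equiv.neg ℤ) (Finsupp.mapRange (starRingEnd ℂ) (map_zero _) p.coeff))

/-- The adjoint of a Laurent matrix polynomial: `~P(z) = Σ A_nᴴ z^{-n}`. -/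
def adjM {n : Type*} (P : Matrix n n (LaurentPolynomial ℂ)) :
    Matrix n n (LaurentPolynomial ℂ) :=
  fun i j => lpAdj (P j i)

/-- The coefficient of `z^n` of a Laurent matrix polynomial, an `M × M` complex matrix. -/
def coeffM {M : ℕ} (P : LMP M) (n : ℤ) : Matrix (Fin M) (Fin M) ℂ :=
  fun i j => (P i j).coeff n

/-- `P^+(M)`: Laurent matrix polynomials with vanishing coefficients at negative powers. -/
def Pplus (M : ℕ) : Set (LMP M) := {P | ∀ n : ℤ, n < 0 → coeffM P n = 0}

/-- `P^-(M)`: Laurent matrix polynomials with vanishing coefficients at positive powers. -/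
def Pminus (M : ℕ) : Set (LMP M) := {P | ∀ n : ℤ, 0 < n → coeffM P n = 0}

/-- `P^+_N(M)`: coefficients vanish unless `0 ≤ n ≤ N`. -/
def PplusN (M N : ℕ) : Set (LMP M) := {P | ∀ n : ℤ, (n < 0 ∨ (N : ℤ) < n) → coeffM P n = 0}

/-- `P^-_N(M)`: coefficients vanish unless `-N ≤ n ≤ 0`. -/
def PminusN (M N : ℕ) : Set (LMP M) := {P | ∀ n : ℤ, (n < -(N : ℤ) ∨ 0 < n) → coeffM P n = 0}

/-- `(x_1, …, x_{m-1}, x_m)` is a solution of the system (2.2). -/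
def IsSolution (M N m : ℕ) (ζ : Fin (m - 1) → LMP M)
    (x : Fin (m - 1) → LMP M) (xm : LMP M) : Prop :=
  (∀ j, x j ∈ PplusN M N) ∧ xm ∈ PplusN M N ∧
    (∀ j, xm * ζ j - adjM (x j) ∈ Pplus M) ∧
    ((∑ j, ζ j * x j) + adjM xm ∈ Pplus M)

/-! ### Auxiliary lemmas -/

/-- Scalar version of membership in `P^+`. -/
def PosL (p : LaurentPolynomial ℂ) : Prop := ∀ n : ℤ, n < 0 → p.coeff n = 0

lemma mem_Pplus_iff {M : ℕ} {P : LMP M} : P ∈ Pplus M ↔ ∀ i j, PosL (P i j) := by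
  constructor
  · intro h i j n hn
    exact congrFun (congrFun (h n hn) i) j
  · intro h n hn
    funext i j
    exact h i j n hn

lemma PosL.add {p q : LaurentPolynomial ℂ} (hp : PosL p) (hq : PosL q) : PosL (p + q) := by
  intro n hn
  rw [AddMonoidAlgebra.coeff_add, Finsupp.add_apply, hp n hn, hq n hn, add_zero]

lemma PosL.neg {p : LaurentPolynomial ℂ} (hp : PosL p) : PosL (-p) := by
  intro n hn
  rw [AddMonoidAlgebra.coeff_neg, Finsupp.neg_apply, hp n hn, neg_zero]

lemma PosL.mul {p q : LaurentPolynomial ℂ} (hp : PosL p) (hq : PosL q) : PosL (p * q) := by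
  intro n hn
  rw [AddMonoidAlgebra.coeff_mul]
  rw [Finsupp.sum]
  refine Finset.sum_eq_zero fun a ha => ?_
  rw [Finsupp.sum]
  refine Finset.sum_eq_zero fun b hb => ?_
  by_cases h0a : (0 : ℤ) ≤ a
  · by_cases h0b : (0 : ℤ) ≤ b
    · have : ¬ (a + b = n) := by omega
      simp [this]
    · rw [hq b (by omega), mul_zero]; simp
  · rw [hp a (by omega), zero_mul]; simp

lemma PosL.sum {ι : Type*} {s : Finset ι} {f : ι → LaurentPolynomial ℂ}
    (h : ∀ i ∈ s, PosL (f i)) : PosL (∑ i ∈ s, f i) := by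
  intro n hn
  rw [AddMonoidAlgebra.coeff_sum, Finsupp.finset_sum_apply]
  exact Finset.sum_eq_zero fun i hi => h i hi n hn

lemma Pplus_add {M : ℕ} {P Q : LMP M} (hP : P ∈ Pplus M) (hQ : Q ∈ Pplus M) :
    P + Q ∈ Pplus M := by
  rw [mem_Pplus_iff] at *
  intro i j
  have : (P + Q) i j = P i j + Q i j := rfl
  rw [this]
  exact (hP i j).add (hQ i j)

lemma Pplus_neg {M : ℕ} {P : LMP M} (hP : P ∈ Pplus M) : -P ∈ Pplus M := by
  rw [mem_Pplus_iff] at *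
  intro i j
  have : (-P) i j = -(P i j) := rfl
  rw [this]
  exact (hP i j).neg

lemma Pplus_mul {M : ℕ} {P Q : LMP M} (hP : P ∈ Pplus M) (hQ : Q ∈ Pplus M) :
    P * Q ∈ Pplus M := by
  rw [mem_Pplus_iff] at *
  intro i j
  rw [Matrix.mul_apply]
  exact PosL.sum fun k _ => (hP i k).mul (hQ k j)

lemma Pplus_sum {M : ℕ} {ι : Type*} {s : Finset ι} {f : ι → LMP M}
    (h : ∀ i ∈ s, f i ∈ Pplus M) : (∑ i ∈ s, f i) ∈ Pplus M := by
  simp only [mem_Pplus_iff] at *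
  intro i j
  have : (∑ k ∈ s, f k) i j = ∑ k ∈ s, f k i j := by
    rw [Matrix.sum_apply]
  rw [this]
  exact PosL.sum fun k hk => h k hk i j

lemma PplusN_subset {M N : ℕ} {P : LMP M} (h : P ∈ PplusN M N) : P ∈ Pplus M :=
  fun n hn => h n (Or.inl hn)

lemma lpAdj_apply (p : LaurentPolynomial ℂ) (n : ℤ) :
    (lpAdj p).coeff n = starRingEnd ℂ (p.coeff (-n)) := rfl

lemma lpAdj_lpAdj (p : LaurentPolynomial ℂ) : lpAdj (lpAdj p) = p := by
  ext n
  simp [lpAdj_apply]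

lemma lpAdj_add (p q : LaurentPolynomial ℂ) : lpAdj (p + q) = lpAdj p + lpAdj q := by
  ext n
  rw [AddMonoidAlgebra.coeff_add, Finsupp.add_apply, lpAdj_apply, lpAdj_apply, lpAdj_apply,
    AddMonoidAlgebra.coeff_add, Finsupp.add_apply, map_add]

lemma sum_lpAdj {N : Type*} [AddCommMonoid N] (p : LaurentPolynomial ℂ) (F : ℤ → ℂ → N)
    (hF : ∀ a, F a 0 = 0) :
    (lpAdj p).coeff.sum F = p.coeff.sum fun a b => F (-a) (starRingEnd ℂ b) := by
  unfold lpAdj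
  rw [AddMonoidAlgebra.coeff_ofCoeff, Finsupp.sum_equivMapDomain, Finsupp.sum_mapRange_index (fun a => hF _)]
  rfl

lemma lpAdj_mul (p q : LaurentPolynomial ℂ) : lpAdj (p * q) = lpAdj p * lpAdj q := by
  ext n
  rw [lpAdj_apply, AddMonoidAlgebra.coeff_mul, AddMonoidAlgebra.coeff_mul]
  rw [sum_lpAdj p _ (fun a => by simp [Finsupp.sum])]
  rw [map_finsuppSum]
  refine Finsupp.sum_congr fun a _ => ?_
  rw [sum_lpAdj q _ (fun c => by simp)]
  rw [map_finsuppSum]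
  refine Finsupp.sum_congr fun c _ => ?_
  rw [apply_ite (starRingEnd ℂ), map_mul, map_zero,
    if_congr (by omega : (a + c = -n) ↔ (-a + -c = n)) rfl rfl]

lemma lpAdj_fsum {ι : Type*} (s : Finset ι) (f : ι → LaurentPolynomial ℂ) :
    lpAdj (∑ i ∈ s, f i) = ∑ i ∈ s, lpAdj (f i) := by
  ext n
  rw [lpAdj_apply, AddMonoidAlgebra.coeff_sum, Finsupp.finset_sum_apply, AddMonoidAlgebra.coeff_sum,
    Finsupp.finset_sum_apply, map_sum]
  rfl

lemma adjM_adjM {M : ℕ} (P : LMP M) : adjM (adjM P) = P := by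
  funext i j
  exact lpAdj_lpAdj _

lemma adjM_add {M : ℕ} (P Q : LMP M) : adjM (P + Q) = adjM P + adjM Q := by
  funext i j
  exact lpAdj_add _ _

lemma adjM_mul {M : ℕ} (P Q : LMP M) : adjM (P * Q) = adjM Q * adjM P := by
  funext i j
  show lpAdj ((P * Q) j i) = _
  rw [Matrix.mul_apply, Matrix.mul_apply, lpAdj_fsum]
  exact Finset.sum_congr rfl fun k _ => by rw [lpAdj_mul, mul_comm]; rfl

lemma adjM_sum {M : ℕ} {ι : Type*} (s : Finset ι) (f : ι → LMP M) :
    adjM (∑ i ∈ s, f i) = ∑ i ∈ s, adjM (f i) := by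
  funext i j
  show lpAdj ((∑ k ∈ s, f k) j i) = (∑ k ∈ s, adjM (f k)) i j
  rw [Matrix.sum_apply, Matrix.sum_apply, lpAdj_fsum]
  rfl

/-- Key step: for any two solutions, `Σ ~uᵢ vᵢ + um ~vm ∈ P⁺`. -/
lemma key_mem_Pplus (M N m : ℕ) (ζ : Fin (m - 1) → LMP M)
    (u : Fin (m - 1) → LMP M) (um : LMP M)
    (v : Fin (m - 1) → LMP M) (vm : LMP M)
    (hu : IsSolution M N m ζ u um) (hv : IsSolution M N m ζ v vm) :
    (∑ i, adjM (u i) * v i) + um * adjM vm ∈ Pplus M := by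
  obtain ⟨hu1, hu2, hu3, hu4⟩ := hu
  obtain ⟨hv1, hv2, hv3, hv4⟩ := hv
  have hid : (∑ i, adjM (u i) * v i) + um * adjM vm
      = um * ((∑ j, ζ j * v j) + adjM vm) + ∑ j, (adjM (u j) - um * ζ j) * v j := by
    simp only [mul_add, Finset.mul_sum, sub_mul, Finset.sum_sub_distrib, mul_assoc]
    abel
  rw [hid]
  refine Pplus_add (Pplus_mul (PplusN_subset hu2) hv4) (Pplus_sum fun j _ => ?_)
  refine Pplus_mul ?_ (PplusN_subset (hv1 j))
  have : adjM (u j) - um * ζ j = -(um * ζ j - adjM (u j)) := (neg_sub _ _).symm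
  rw [this]
  exact Pplus_neg (hu3 j)

/-- Lemma 1, equation (S5): for any two solutions `u`, `v` of the system,
`Σ_{i=1}^{m-1} ~u_i · v_i + u_m · ~v_m` is a constant `M × M` matrix. -/
theorem lemma_sum_is_constant (M N m : ℕ) (hM : 0 < M) (hN : 0 < N) (hm : 2 ≤ m)
    (ζ : Fin (m - 1) → LMP M) (hζ : ∀ j, ζ j ∈ PminusN M N)
    (u : Fin (m - 1) → LMP M) (um : LMP M)
    (v : Fin (m - 1) → LMP M) (vm : LMP M)
    (hu : IsSolution M N m ζ u um) (hv : IsSolution M N m ζ v vm) :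
    ∃ C : Matrix (Fin M) (Fin M) ℂ,
      (∑ i, adjM (u i) * v i) + um * adjM vm = C.map LaurentPolynomial.C := by
  set F := (∑ i, adjM (u i) * v i) + um * adjM vm with hF
  set G := (∑ i, adjM (v i) * u i) + vm * adjM um with hG
  have hFp : F ∈ Pplus M := key_mem_Pplus M N m ζ u um v vm hu hv
  have hGp : G ∈ Pplus M := key_mem_Pplus M N m ζ v vm u um hv hu
  have hadj : adjM F = G := by
    rw [hF, hG, adjM_add, adjM_mul, adjM_adjM, adjM_sum]
    congr 1
    exact Finset.sum_congr rfl fun i _ => by rw [adjM_mul, adjM_adjM]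
  have hzero : ∀ (i j : Fin M) (n : ℤ), n ≠ 0 → (F i j).coeff n = 0 := by
    intro i j n hn
    rcases lt_or_gt_of_ne hn with h | h
    · exact congrFun (congrFun (hFp n h) i) j
    · have h1 : ((adjM F) j i).coeff (-n) = 0 :=
        congrFun (congrFun (hadj ▸ hGp (-n) (by omega)) j) i
      have h2 : ((adjM F) j i).coeff (-n) = starRingEnd ℂ ((F i j).coeff n) := by
        show (lpAdj (F i j)).coeff (-n) = _
        rw [lpAdj_apply, neg_neg]
      rw [h2] at h1
      simpa using congrArg (starRingEnd ℂ) h1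
  refine ⟨coeffM F 0, ?_⟩
  funext i j
  ext n
  have hC : (LaurentPolynomial.C (coeffM F 0 i j) : LaurentPolynomial ℂ).coeff n
      = if n = 0 then (F i j).coeff 0 else 0 := by
    have h1 : (LaurentPolynomial.C (coeffM F 0 i j) : LaurentPolynomial ℂ)
        = AddMonoidAlgebra.single 0 (coeffM F 0 i j) := rfl
    rw [h1, AddMonoidAlgebra.coeff_single, Finsupp.single_apply]
    simp [eq_comm, coeffM]
  show (F i j).coeff n = ((Matrix.map (coeffM F 0) LaurentPolynomial.C) i j).coeff n
  rw [Matrix.map_apply, hC]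
  by_cases h : n = 0
  · subst h; simp [coeffM]
  · rw [if_neg h]
    exact hzero i j n h
end
end

section
/- Let M and N be positive integers, let ζ ∈ P^-_N(M), and let f ∈ P^+_N(M) with det C_0{f} ≠ 0, where C_0{f} ∈ ℂ^{M×M} is the coefficient of z^0 in f. Then there exist ζ^- ∈ P^-_N(M) and a matrix formal power series ζ^+(z) = Σ_{n≥0} B_n z^n with B_n ∈ ℂ^{M×M} such that ζ = f·(ζ^+ + ζ^-) holds as an identity of M×M matrices of formal Laurent series (i.e., in the ring of M×M matrices over the field of formal Laurent series ℂ((z)), with ζ, f, and ζ^- coerced into that ring). -/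
noncomputable section

/-- Regard a Laurent polynomial as a formal Laurent series. -/
def lpToLS (p : LaurentPolynomial ℂ) : LaurentSeries ℂ where
  coeff := fun n => p.coeff n
  isPWO_support' := by
    rw [Finsupp.fun_support_eq]
    exact p.coeff.support.finite_toSet.isPWO


lemma lpToLS_coeff (p : LaurentPolynomial ℂ) (n : ℤ) : (lpToLS p).coeff n = p.coeff n := rfl

/-- The coefficient at `n` of a Laurent series, as an additive monoid hom. -/
def lsCoeffHom (n : ℤ) : LaurentSeries ℂ →+ ℂ where
  toFun x := x.coeff n
  map_zero' := rfl
  map_add' x y := by simp [HahnSeries.coeff_add]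

lemma ofPS_coeff_neg (x : PowerSeries ℂ) (n : ℤ) (hn : n < 0) :
    (HahnSeries.ofPowerSeries ℤ ℂ x).coeff n = 0 := by
  rw [HahnSeries.ofPowerSeries_apply, HahnSeries.embDomain_notin_range]
  rintro ⟨m, hm⟩
  change ((m : ℕ) : ℤ) = n at hm
  omega

lemma ofPS_coeff_nonneg (x : PowerSeries ℂ) (n : ℤ) (hn : 0 ≤ n) :
    (HahnSeries.ofPowerSeries ℤ ℂ x).coeff n = PowerSeries.coeff n.toNat x := by
  have : n = ((n.toNat : ℕ) : ℤ) := by omega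
  rw [this, HahnSeries.ofPowerSeries_apply_coeff]
  congr 1

lemma mul_coeff_eq_zero {x y : LaurentSeries ℂ} {a b n : ℤ}
    (hx : ∀ m, m < a → x.coeff m = 0) (hy : ∀ m, m < b → y.coeff m = 0)
    (hn : n < a + b) : (x * y).coeff n = 0 := by
  rw [HahnSeries.coeff_mul]
  refine Finset.sum_eq_zero fun ij hij => ?_
  rw [Finset.mem_addAntidiagonal] at hij
  obtain ⟨h1, h2, h3⟩ := hij
  rw [HahnSeries.mem_support] at h1 h2
  have ha : a ≤ ij.1 := le_of_not_gt fun h => h1 (hx _ h)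
  have hb : b ≤ ij.2 := le_of_not_gt fun h => h2 (hy _ h)
  exact absurd h3 (by omega)

/-- if `ζ ∈ P^-_N(M)` and `f ∈ P^+_N(M)` with `det C_0{f} ≠ 0`, then there are
`ζ^- ∈ P^-_N(M)` and a matrix formal power series `ζ^+` with `ζ = f · (ζ^+ + ζ^-)` in the
ring of `M × M` matrices over the formal Laurent series `ℂ((z))`. -/
theorem zeta_decomposition (M N : ℕ) (hM : 0 < M) (hN : 0 < N)
    (ζ : LMP M) (hζ : ζ ∈ PminusN M N)
    (f : LMP M) (hf : f ∈ PplusN M N) (hdet : (coeffM f 0).det ≠ 0) :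
    ∃ ζm ∈ PminusN M N, ∃ ζp : Matrix (Fin M) (Fin M) (PowerSeries ℂ),
      ζ.map lpToLS =
        f.map lpToLS * (ζp.map (HahnSeries.ofPowerSeries ℤ ℂ) + ζm.map lpToLS) := by
    classical
  set φ := HahnSeries.ofPowerSeries ℤ ℂ with hφ
  set fP : Matrix (Fin M) (Fin M) (PowerSeries ℂ) :=
    fun i j => PowerSeries.mk fun n => (f i j).coeff (n : ℤ) with hfPdef
  have hfmap : f.map lpToLS = fP.map φ := by
    funext i j
    simp only [Matrix.map_apply]
    ext n
    rcases lt_or_ge n 0 with h | h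
    · rw [lpToLS_coeff, ofPS_coeff_neg _ _ h]
      exact congrFun (congrFun (hf n (Or.inl h)) i) j
    · rw [lpToLS_coeff, ofPS_coeff_nonneg _ _ h, hfPdef]
      simp only [PowerSeries.coeff_mk]
      congr 1
      omega
  have hdetU : IsUnit fP.det := by
    rw [PowerSeries.isUnit_iff_constantCoeff]
    have h1 : PowerSeries.constantCoeff fP.det
        = Matrix.det (fP.map PowerSeries.constantCoeff) := RingHom.map_det _ _
    have h2 : fP.map PowerSeries.constantCoeff = coeffM f 0 := by
      funext i j
      simp [hfPdef, Matrix.map_apply, coeffM]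
      show PowerSeries.constantCoeff (PowerSeries.mk fun n => (f i j).coeff (n : ℤ)) = _
      rw [← PowerSeries.coeff_zero_eq_constantCoeff_apply, PowerSeries.coeff_mk]
      rfl
    rw [h1, h2]
    exact isUnit_iff_ne_zero.mpr hdet
  set gP := fP⁻¹ with hgPdef
  have hfg : fP * gP = 1 := Matrix.mul_nonsing_inv _ hdetU
  set Z := ζ.map lpToLS with hZdef
  set H := gP.map φ * Z with hHdef
  have hZc : ∀ k j : Fin M, ∀ n : ℤ, n < -(N:ℤ) → (Z k j).coeff n = 0 := by
    intro k j n hn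
    have := congrFun (congrFun (hζ n (Or.inl hn)) k) j
    simpa [hZdef, Matrix.map_apply, lpToLS_coeff, coeffM] using this
  have hHc : ∀ i j : Fin M, ∀ n : ℤ, n < -(N:ℤ) → (H i j).coeff n = 0 := by
    intro i j n hn
    rw [hHdef, Matrix.mul_apply]
    have hsum : (∑ k : Fin M, (gP.map ⇑φ) i k * Z k j).coeff n
        = ∑ k : Fin M, ((gP.map ⇑φ) i k * Z k j).coeff n :=
      map_sum (lsCoeffHom n) _ _
    rw [hsum]
    refine Finset.sum_eq_zero fun k _ => ?_
    refine mul_coeff_eq_zero (a := 0) (b := -(N:ℤ)) ?_ (hZc k j) (by omega)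
    intro m hm
    exact ofPS_coeff_neg _ _ hm
  -- the negative tail of `H`, as a Laurent matrix polynomial
  set ζm : LMP M :=
    fun i j => AddMonoidAlgebra.ofCoeff (Finsupp.onFinset (Finset.Ico (-(N:ℤ)) 0)
      (fun n => if -(N:ℤ) ≤ n ∧ n < 0 then (H i j).coeff n else 0)
      (fun n hn => by
        rw [Finset.mem_Ico]
        by_contra hc
        exact hn (if_neg hc))) with hζmdef
  have hζmc : ∀ i j : Fin M, ∀ n : ℤ,
      (ζm i j).coeff n = if -(N:ℤ) ≤ n ∧ n < 0 then (H i j).coeff n else 0 := fun i j n => rfl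
  refine ⟨ζm, ?_, ?_⟩
  · intro n hn
    funext i j
    show (ζm i j).coeff n = 0
    rw [hζmc, if_neg (by omega)]
  · set ζp : Matrix (Fin M) (Fin M) (PowerSeries ℂ) :=
      fun i j => PowerSeries.mk fun n => (H i j).coeff (n:ℤ) with hζpdef
    refine ⟨ζp, ?_⟩
    have key : ζp.map φ + ζm.map lpToLS = H := by
      funext i j
      show φ (ζp i j) + lpToLS (ζm i j) = H i j
      ext n
      rw [HahnSeries.coeff_add, lpToLS_coeff, hζmc]
      rcases le_or_gt 0 n with h | h
      · rw [ofPS_coeff_nonneg _ _ h, if_neg (by omega), hζpdef]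
        simp only [PowerSeries.coeff_mk, add_zero]
        congr 1
        omega
      · rw [ofPS_coeff_neg _ _ h, zero_add]
        split_ifs with h2
        · rfl
        · exact (hHc i j n (by omega)).symm
    rw [key, hfmap, hHdef, ← Matrix.mul_assoc]
    have hone : fP.map φ * gP.map φ = (1 : Matrix (Fin M) (Fin M) (LaurentSeries ℂ)) := by
      rw [← RingHom.mapMatrix_apply, ← RingHom.mapMatrix_apply, ← map_mul, hfg, map_one]
    rw [hone, Matrix.one_mul]
end
end
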